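/- Let $n, N \ge 1$, $1 < q < \infty$, $\sigma, \tau > 0$, $K > \sigma$ and $C > 0$. Let $(A_s)_{s > 0}$ be a family of bounded linear operators on $L^q(\mathbb{R}^n, \mathbb{C}^N)$ such that $s \mapsto A_s u$ is strongly measurable for each $u$, and such that for all $s > 0$, all Borel sets $E, F \subseteq \mathbb{R}^n$ and all $u \in L^q$: $\|\chi_F A_s(\chi_E u)\|_{L^q} \le C \left(1 + \frac{d(E,F)}{s}\right)^{-K} \|\chi_E u\|_{L^q}$. Let $t > 0$ and let $m : (0,\infty) \to \mathbb{C}$ be measurable with $|m(s)| \le \min\!\left(\left(\frac{t}{s}\right)^\sigma, \left(\frac{s}{t}\right)^\tau\right)$ for all $s > 0$. Then for every $u \in L^q$ the Bochner integral $T u := \int_0^\infty m(s)\, A_s u\, \frac{ds}{s}$ converges in $L^q$, and there is a constant $C'$ depending only on $\sigma, \tau, K, C$ such that for all Borel sets $E, F \subseteq \mathbb{R}^n$ and all $u \in L^q$: $\|\chi_F T(\chi_E u)\|_{L^q} \le C' \left(1 + \frac{d(E,F)}{t}\right)^{-\sigma} \|\chi_E u\|_{L^q}$. -/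

import Mathlib

open MeasureTheory ENNReal

/-- The distance `d(E,F) = inf {dist x y | x ∈ E, y ∈ F}` between two sets. -/
noncomputable def setDist {α : Type*} [PseudoMetricSpace α] (E F : Set α) : ℝ :=
  sInf (Set.image2 dist E F)

/-- Multiplication of an element of `L^p` by the indicator function of a measurable set. -/
noncomputable def indLp {α : Type*} [MeasurableSpace α] {μ : Measure α}
    {E : Type*} [NormedAddCommGroup E] {p : ℝ≥0∞}
    {S : Set α} (hS : MeasurableSet S) (u : Lp E p μ) : Lp E p μ :=
  MeasureTheory.MemLp.toLp (S.indicator u) ((MeasureTheory.Lp.memLp u).indicator hS)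

section ScalarAux
open Set

namespace Stmt11Aux

lemma rpow_mul_rpow (s a b : ℝ) (hs : 0 < s) : s ^ a * s ^ b = s ^ (a + b) :=
  (Real.rpow_add hs a b).symm

lemma min_g_le_pow1 {σ τ t s : ℝ} (ht : 0 < t) (hs : 0 < s) :
    min ((t / s) ^ σ) ((s / t) ^ τ) * s⁻¹ ≤ t ^ (-τ) * s ^ (τ - 1) := by
  have h1 : min ((t / s) ^ σ) ((s / t) ^ τ) ≤ (s / t) ^ τ := min_le_right _ _
  have h2 : (s / t) ^ τ = s ^ τ * t ^ (-τ) := by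
    rw [Real.div_rpow hs.le ht.le, Real.rpow_neg ht.le, div_eq_mul_inv]
  have h3 : s ^ τ * s⁻¹ = s ^ (τ - 1) := by
    rw [← Real.rpow_neg_one s, rpow_mul_rpow _ _ _ hs]; ring_nf
  calc min ((t / s) ^ σ) ((s / t) ^ τ) * s⁻¹ ≤ (s / t) ^ τ * s⁻¹ := by
        exact mul_le_mul_of_nonneg_right h1 (by positivity)
    _ = t ^ (-τ) * s ^ (τ - 1) := by rw [h2, ← h3]; ring

lemma min_g_le_pow2 {σ τ t s : ℝ} (ht : 0 < t) (hs : 0 < s) :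
    min ((t / s) ^ σ) ((s / t) ^ τ) * s⁻¹ ≤ t ^ σ * s ^ (-σ - 1) := by
  have h1 : min ((t / s) ^ σ) ((s / t) ^ τ) ≤ (t / s) ^ σ := min_le_left _ _
  have h2 : (t / s) ^ σ = t ^ σ * s ^ (-σ) := by
    rw [Real.div_rpow ht.le hs.le, Real.rpow_neg hs.le, div_eq_mul_inv]
  have h3 : s ^ (-σ) * s⁻¹ = s ^ (-σ - 1) := by
    rw [← Real.rpow_neg_one s, rpow_mul_rpow _ _ _ hs]; ring_nf
  calc min ((t / s) ^ σ) ((s / t) ^ τ) * s⁻¹ ≤ (t / s) ^ σ * s⁻¹ := by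
        exact mul_le_mul_of_nonneg_right h1 (by positivity)
    _ = t ^ σ * s ^ (-σ - 1) := by rw [h2, ← h3]; ring

lemma integrableOn_pow1 {τ t : ℝ} (hτ : 0 < τ) (ht : 0 < t) :
    IntegrableOn (fun s : ℝ => s ^ (τ - 1)) (Ioc 0 t) := by
  exact (intervalIntegrable_iff_integrableOn_Ioc_of_le ht.le).1
    (intervalIntegral.intervalIntegrable_rpow' (by linarith))

lemma integral_pow1 {τ t : ℝ} (hτ : 0 < τ) (ht : 0 < t) :
    ∫ s in Ioc (0:ℝ) t, s ^ (τ - 1) = t ^ τ / τ := by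
  have h := integral_rpow (a := 0) (b := t) (Or.inl (by linarith : (-1:ℝ) < τ - 1))
  rw [intervalIntegral.integral_of_le ht.le] at h
  rw [h, Real.zero_rpow (by linarith : τ - 1 + 1 ≠ 0)]
  ring_nf

lemma integral_pow2 {σ c : ℝ} (hσ : 0 < σ) (hc : 0 < c) :
    ∫ s in Ioi c, s ^ (-σ - 1) = c ^ (-σ) / σ := by
  rw [integral_Ioi_rpow_of_lt (by linarith) hc]
  rw [show -σ - 1 + 1 = -σ by ring]
  field_simp

lemma integrableOn_min_g {σ τ t : ℝ} (hσ : 0 < σ) (hτ : 0 < τ) (ht : 0 < t) :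
    IntegrableOn (fun s : ℝ => min ((t / s) ^ σ) ((s / t) ^ τ) * s⁻¹) (Ioi 0) := by
  have hmeas : AEStronglyMeasurable (fun s : ℝ => min ((t / s) ^ σ) ((s / t) ^ τ) * s⁻¹)
      (volume.restrict (Ioi (0:ℝ))) := by
    apply Measurable.aestronglyMeasurable
    exact ((Measurable.min (((measurable_const.div measurable_id).pow_const σ))
      (((measurable_id.div measurable_const).pow_const τ))).mul measurable_inv)
  rw [show Ioi (0:ℝ) = Ioc 0 t ∪ Ioi t from (Ioc_union_Ioi_eq_Ioi ht.le).symm]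
  apply IntegrableOn.union
  · apply Integrable.mono' ((integrableOn_pow1 hτ ht).const_mul (t ^ (-τ)))
      (hmeas.mono_set (by rw [show Ioi (0:ℝ) = Ioc 0 t ∪ Ioi t from (Ioc_union_Ioi_eq_Ioi ht.le).symm]; exact subset_union_left))
    filter_upwards [ae_restrict_mem measurableSet_Ioc] with s hs
    have hs0 : 0 < s := hs.1
    rw [Real.norm_eq_abs, abs_of_nonneg (by positivity)]
    exact min_g_le_pow1 ht hs0
  · apply Integrable.mono' ((integrableOn_Ioi_rpow_of_lt (by linarith : -σ - 1 < -1) ht).const_mul (t ^ σ))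
      (hmeas.mono_set (by rw [show Ioi (0:ℝ) = Ioc 0 t ∪ Ioi t from (Ioc_union_Ioi_eq_Ioi ht.le).symm]; exact subset_union_right))
    filter_upwards [ae_restrict_mem measurableSet_Ioi] with s hs
    have hs0 : 0 < s := ht.trans hs
    rw [Real.norm_eq_abs, abs_of_nonneg (by positivity)]
    exact min_g_le_pow2 ht hs0

end Stmt11Aux

namespace Stmt11Aux

open Real

/-- The integrand with off-diagonal factor. -/
noncomputable def Fn (σ τ K t d : ℝ) (s : ℝ) : ℝ :=
  min ((t / s) ^ σ) ((s / t) ^ τ) * (1 + d / s) ^ (-K) * s⁻¹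

lemma Fn_nonneg {σ τ K t d : ℝ} (ht : 0 < t) (hd : 0 ≤ d) {s : ℝ} (hs : 0 < s) :
    0 ≤ Fn σ τ K t d s := by
  unfold Fn; positivity

lemma fac_le_one {K d s : ℝ} (hK : 0 ≤ K) (hd : 0 ≤ d) (hs : 0 < s) :
    (1 + d / s) ^ (-K) ≤ 1 :=
  Real.rpow_le_one_of_one_le_of_nonpos (by nlinarith [div_nonneg hd hs.le]) (by linarith)

lemma Fn_le_min_g {σ τ K t d : ℝ} (hK : 0 ≤ K) (ht : 0 < t) (hd : 0 ≤ d) {s : ℝ} (hs : 0 < s) :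
    Fn σ τ K t d s ≤ min ((t / s) ^ σ) ((s / t) ^ τ) * s⁻¹ := by
  unfold Fn
  have h1 : (0:ℝ) ≤ min ((t / s) ^ σ) ((s / t) ^ τ) := by positivity
  calc min ((t / s) ^ σ) ((s / t) ^ τ) * (1 + d / s) ^ (-K) * s⁻¹
      ≤ min ((t / s) ^ σ) ((s / t) ^ τ) * 1 * s⁻¹ := by
        have := fac_le_one hK hd hs
        have hsi : (0:ℝ) ≤ s⁻¹ := by positivity
        nlinarith [mul_le_mul_of_nonneg_left this h1]
    _ = min ((t / s) ^ σ) ((s / t) ^ τ) * s⁻¹ := by ring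

lemma Fn_integrableOn {σ τ K t d : ℝ} (hσ : 0 < σ) (hτ : 0 < τ) (hK : 0 ≤ K)
    (ht : 0 < t) (hd : 0 ≤ d) : IntegrableOn (Fn σ τ K t d) (Ioi 0) := by
  apply Integrable.mono' (integrableOn_min_g hσ hτ ht)
  · apply Measurable.aestronglyMeasurable
    unfold Fn
    exact (((Measurable.min (((measurable_const.div measurable_id).pow_const σ))
      (((measurable_id.div measurable_const).pow_const τ))).mul
      ((measurable_const.add (measurable_const.div measurable_id)).pow_const (-K))).mul
      measurable_inv)
  · filter_upwards [ae_restrict_mem measurableSet_Ioi] with s hs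
    have hs0 : 0 < s := hs
    rw [Real.norm_eq_abs, abs_of_nonneg (Fn_nonneg ht hd hs0)]
    exact Fn_le_min_g hK ht hd hs0

lemma integral_min_g_le {σ τ t : ℝ} (hσ : 0 < σ) (hτ : 0 < τ) (ht : 0 < t) :
    ∫ s in Ioi (0:ℝ), min ((t / s) ^ σ) ((s / t) ^ τ) * s⁻¹ ≤ 1 / τ + 1 / σ := by
  have hint := integrableOn_min_g hσ hτ ht
  rw [show Ioi (0:ℝ) = Ioc 0 t ∪ Ioi t from (Ioc_union_Ioi_eq_Ioi ht.le).symm] at hint ⊢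
  rw [setIntegral_union (Ioc_disjoint_Ioi le_rfl) measurableSet_Ioi
    (hint.mono_set subset_union_left) (hint.mono_set subset_union_right)]
  have h1 : ∫ s in Ioc (0:ℝ) t, min ((t / s) ^ σ) ((s / t) ^ τ) * s⁻¹ ≤ 1 / τ := by
    calc ∫ s in Ioc (0:ℝ) t, min ((t / s) ^ σ) ((s / t) ^ τ) * s⁻¹
        ≤ ∫ s in Ioc (0:ℝ) t, t ^ (-τ) * s ^ (τ - 1) := by
          apply setIntegral_mono_on (hint.mono_set subset_union_left)
            ((integrableOn_pow1 hτ ht).const_mul _) measurableSet_Ioc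
          intro s hs; exact min_g_le_pow1 ht hs.1
      _ = t ^ (-τ) * (t ^ τ / τ) := by rw [integral_const_mul, integral_pow1 hτ ht]
      _ = 1 / τ := by
          rw [Real.rpow_neg ht.le]
          field_simp
  have h2 : ∫ s in Ioi t, min ((t / s) ^ σ) ((s / t) ^ τ) * s⁻¹ ≤ 1 / σ := by
    calc ∫ s in Ioi t, min ((t / s) ^ σ) ((s / t) ^ τ) * s⁻¹
        ≤ ∫ s in Ioi t, t ^ σ * s ^ (-σ - 1) := by
          apply setIntegral_mono_on (hint.mono_set subset_union_right)
            ((integrableOn_Ioi_rpow_of_lt (by linarith : -σ - 1 < -1) ht).const_mul _)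
            measurableSet_Ioi
          intro s hs; exact min_g_le_pow2 ht (ht.trans hs)
      _ = t ^ σ * (t ^ (-σ) / σ) := by rw [integral_const_mul, integral_pow2 hσ ht]
      _ = 1 / σ := by
          rw [Real.rpow_neg ht.le]
          field_simp
  linarith

end Stmt11Aux

namespace Stmt11Aux

lemma pw_low {σ τ K t d s : ℝ} (hσ : 0 < σ) (hK : σ ≤ K) (ht : 0 < t) (hd : 0 ≤ d)
    (hs : 0 < s) (hst : s ≤ t) :
    Fn σ τ K t d s ≤ (1 + d / t) ^ (-σ) * (t ^ (-τ) * s ^ (τ - 1)) := by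
  have hfac : (1 + d / s) ^ (-K) ≤ (1 + d / t) ^ (-σ) := by
    have h1 : (1 + d / s) ^ (-K) ≤ (1 + d / t) ^ (-K) := by
      apply Real.rpow_le_rpow_of_nonpos (by positivity) _ (by linarith)
      have : d / t ≤ d / s := by
        rw [div_le_div_iff₀ ht hs]
        nlinarith
      linarith
    have h2 : (1 + d / t) ^ (-K) ≤ (1 + d / t) ^ (-σ) := by
      apply Real.rpow_le_rpow_of_exponent_le (by nlinarith [div_nonneg hd ht.le]) (by linarith)
    linarith
  have hmin : (0:ℝ) ≤ min ((t / s) ^ σ) ((s / t) ^ τ) := by positivity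
  have h3 := min_g_le_pow1 (τ := τ) (σ := σ) ht hs
  calc Fn σ τ K t d s = (1 + d / s) ^ (-K) * (min ((t / s) ^ σ) ((s / t) ^ τ) * s⁻¹) := by
        unfold Fn; ring
    _ ≤ (1 + d / t) ^ (-σ) * (t ^ (-τ) * s ^ (τ - 1)) := by
        apply mul_le_mul hfac h3 (by positivity) (by positivity)

lemma pw_mid {σ τ K t d s : ℝ} (hσ : 0 < σ) (hK : 0 < K) (ht : 0 < t) (hts : t < s)
    (hsd : s ≤ d) : Fn σ τ K t d s ≤ t ^ σ * d ^ (-K) * s ^ (K - σ - 1) := by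
  have hs : 0 < s := ht.trans hts
  have hd : 0 < d := hs.trans_le hsd
  have hmin : min ((t / s) ^ σ) ((s / t) ^ τ) ≤ t ^ σ * s ^ (-σ) := by
    calc min ((t / s) ^ σ) ((s / t) ^ τ) ≤ (t / s) ^ σ := min_le_left _ _
      _ = t ^ σ * s ^ (-σ) := by
        rw [Real.div_rpow ht.le hs.le, Real.rpow_neg hs.le, div_eq_mul_inv]
  have hfac : (1 + d / s) ^ (-K) ≤ d ^ (-K) * s ^ K := by
    have hb : d / s ≤ 1 + d / s := by linarith
    have h1 : (1 + d / s) ^ (-K) ≤ (d / s) ^ (-K) :=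
      Real.rpow_le_rpow_of_nonpos (by positivity) hb (by linarith)
    have h2 : (d / s) ^ (-K) = d ^ (-K) * s ^ K := by
      rw [Real.div_rpow hd.le hs.le, Real.rpow_neg hs.le]
      field_simp
    linarith
  have hmin0 : (0:ℝ) ≤ min ((t / s) ^ σ) ((s / t) ^ τ) := by positivity
  have e : s ^ (-σ) * (s ^ K * s⁻¹) = s ^ (K - σ - 1) := by
    rw [← Real.rpow_neg_one s, rpow_mul_rpow _ _ _ hs, rpow_mul_rpow _ _ _ hs]
    ring_nf
  calc Fn σ τ K t d s
      ≤ (t ^ σ * s ^ (-σ)) * (d ^ (-K) * s ^ K) * s⁻¹ := by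
        unfold Fn
        apply mul_le_mul_of_nonneg_right _ (by positivity)
        exact mul_le_mul hmin hfac (by positivity) (by positivity)
    _ = t ^ σ * d ^ (-K) * (s ^ (-σ) * (s ^ K * s⁻¹)) := by ring
    _ = t ^ σ * d ^ (-K) * s ^ (K - σ - 1) := by rw [e]

lemma pw_high {σ τ K t d s : ℝ} (hK : 0 ≤ K) (ht : 0 < t) (hd : 0 ≤ d) (hs : 0 < s) :
    Fn σ τ K t d s ≤ t ^ σ * s ^ (-σ - 1) :=
  le_trans (Fn_le_min_g hK ht hd hs) (min_g_le_pow2 ht hs)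

/-- `(t/d)^σ = t^σ d^(-σ) ≤ 2^σ (1+d/t)^(-σ)` when `0 < t ≤ d`. -/
lemma ratio_le {σ t d : ℝ} (hσ : 0 < σ) (ht : 0 < t) (htd : t ≤ d) :
    t ^ σ * d ^ (-σ) ≤ 2 ^ σ * (1 + d / t) ^ (-σ) := by
  have hd : 0 < d := ht.trans_le htd
  have h1 : (1 + d / t) ^ (-σ) = (t / (t + d)) ^ σ := by
    rw [show 1 + d / t = (t + d) / t by field_simp, Real.rpow_neg (by positivity),
      ← Real.inv_rpow (by positivity), inv_div]
  have h2 : t / (2 * d) ≤ t / (t + d) := by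
    apply div_le_div_of_nonneg_left ht.le (by positivity) (by linarith)
  have h3 : (t / (2 * d)) ^ σ ≤ (t / (t + d)) ^ σ :=
    Real.rpow_le_rpow (by positivity) h2 hσ.le
  have h4 : (t / (2 * d)) ^ σ = t ^ σ * d ^ (-σ) / 2 ^ σ := by
    rw [show t / (2 * d) = (t / d) / 2 by ring, Real.div_rpow (by positivity) (by norm_num),
      Real.div_rpow ht.le hd.le, Real.rpow_neg hd.le]
    ring
  rw [h1]
  have h2σ : (0:ℝ) < 2 ^ σ := by positivity
  calc t ^ σ * d ^ (-σ) = 2 ^ σ * (t ^ σ * d ^ (-σ) / 2 ^ σ) := by field_simp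
    _ ≤ 2 ^ σ * (t / (t + d)) ^ σ := by
        apply mul_le_mul_of_nonneg_left _ (by positivity)
        rw [← h4]; exact h3

end Stmt11Aux

namespace Stmt11Aux

lemma two_rpow_mul_neg (σ : ℝ) : (2:ℝ) ^ σ * 2 ^ (-σ) = 1 := by
  rw [← Real.rpow_add two_pos]; simp

lemma one_le_two_rpow {σ : ℝ} (hσ : 0 ≤ σ) : (1:ℝ) ≤ 2 ^ σ := by
  calc (1:ℝ) = 2 ^ (0:ℝ) := by simp
    _ ≤ 2 ^ σ := Real.rpow_le_rpow_of_exponent_le one_le_two hσ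

lemma key {σ τ K t d : ℝ} (hσ : 0 < σ) (hτ : 0 < τ) (hK : σ < K) (ht : 0 < t) (hd : 0 ≤ d) :
    ∫ s in Ioi (0:ℝ), Fn σ τ K t d s ≤
      2 ^ σ * (1 / τ + 1 / σ + 1 / (K - σ)) * (1 + d / t) ^ (-σ) := by
  have hK0 : 0 < K := hσ.trans hK
  have hKσ : 0 < K - σ := sub_pos.2 hK
  set w : ℝ := (1 + d / t) ^ (-σ) with hw
  have hw0 : 0 < w := by positivity
  have hFint := Fn_integrableOn hσ hτ hK0.le ht hd
  have h2σ1 : (1:ℝ) ≤ 2 ^ σ := one_le_two_rpow hσ.le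
  have hSpos : (0:ℝ) < 1 / τ + 1 / σ + 1 / (K - σ) :=
    add_pos (add_pos (by positivity) (by positivity)) (one_div_pos.2 hKσ)
  rcases le_or_gt d t with hcase | hcase
  · have hb1 : ∫ s in Ioi (0:ℝ), Fn σ τ K t d s ≤
        ∫ s in Ioi (0:ℝ), min ((t / s) ^ σ) ((s / t) ^ τ) * s⁻¹ :=
      setIntegral_mono_on hFint (integrableOn_min_g hσ hτ ht) measurableSet_Ioi
        (fun s hs => Fn_le_min_g hK0.le ht hd hs)
    have hb2 := integral_min_g_le hσ hτ ht
    have hw2 : (2:ℝ) ^ (-σ) ≤ w := by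
      apply Real.rpow_le_rpow_of_nonpos (by positivity) _ (by linarith)
      have : d / t ≤ 1 := (div_le_one ht).2 hcase
      linarith
    have h1 : 2 ^ σ * (1 / τ + 1 / σ + 1 / (K - σ)) * 2 ^ (-σ) ≤
        2 ^ σ * (1 / τ + 1 / σ + 1 / (K - σ)) * w :=
      mul_le_mul_of_nonneg_left hw2 (by positivity)
    have h2 : 2 ^ σ * (1 / τ + 1 / σ + 1 / (K - σ)) * 2 ^ (-σ) =
        1 / τ + 1 / σ + 1 / (K - σ) := by
      rw [mul_comm ((2:ℝ) ^ σ) _, mul_assoc, two_rpow_mul_neg]; ring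
    have h3 : (0:ℝ) < 1 / (K - σ) := one_div_pos.2 hKσ
    linarith
  · -- t < d
    have hd0 : 0 < d := ht.trans hcase
    rw [show Ioi (0:ℝ) = Ioc 0 t ∪ Ioi t from (Ioc_union_Ioi_eq_Ioi ht.le).symm,
      setIntegral_union (Ioc_disjoint_Ioi le_rfl) measurableSet_Ioi
        (hFint.mono_set (by rw [← Ioc_union_Ioi_eq_Ioi ht.le]; exact subset_union_left))
        (hFint.mono_set (by rw [← Ioc_union_Ioi_eq_Ioi ht.le]; exact subset_union_right)),
      show Ioi t = Ioc t d ∪ Ioi d from (Ioc_union_Ioi_eq_Ioi hcase.le).symm,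
      setIntegral_union (Ioc_disjoint_Ioi le_rfl) measurableSet_Ioi
        (hFint.mono_set (by
          rw [← Ioc_union_Ioi_eq_Ioi ht.le]
          exact subset_union_right.trans' (by
            rw [← Ioc_union_Ioi_eq_Ioi hcase.le]; exact subset_union_left)))
        (hFint.mono_set (by
          rw [← Ioc_union_Ioi_eq_Ioi ht.le]
          exact (Ioi_subset_Ioi hcase.le).trans subset_union_right))]
    have hP1 : ∫ s in Ioc (0:ℝ) t, Fn σ τ K t d s ≤ w * (1 / τ) := by
      calc ∫ s in Ioc (0:ℝ) t, Fn σ τ K t d s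
          ≤ ∫ s in Ioc (0:ℝ) t, w * (t ^ (-τ) * s ^ (τ - 1)) := by
            apply setIntegral_mono_on
              (hFint.mono_set (by rw [← Ioc_union_Ioi_eq_Ioi ht.le]; exact subset_union_left))
              (((integrableOn_pow1 hτ ht).const_mul _).const_mul _) measurableSet_Ioc
            intro s hs
            exact pw_low hσ hK.le ht hd hs.1 hs.2
        _ = w * (t ^ (-τ) * (t ^ τ / τ)) := by
            rw [integral_const_mul, integral_const_mul, integral_pow1 hτ ht]
        _ = w * (1 / τ) := by
            rw [Real.rpow_neg ht.le]
            congr 1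
            field_simp
    have hP2 : ∫ s in Ioc t d, Fn σ τ K t d s ≤ 2 ^ σ * w * (1 / (K - σ)) := by
      have hint2 : IntegrableOn (fun s : ℝ => s ^ (K - σ - 1)) (Ioc t d) :=
        (intervalIntegrable_iff_integrableOn_Ioc_of_le hcase.le).1
          (intervalIntegral.intervalIntegrable_rpow' (by linarith))
      have hval : ∫ s in Ioc t d, (s : ℝ) ^ (K - σ - 1) =
          (d ^ (K - σ) - t ^ (K - σ)) / (K - σ) := by
        have h := integral_rpow (a := t) (b := d) (Or.inl (by linarith : (-1:ℝ) < K - σ - 1))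
        rw [intervalIntegral.integral_of_le hcase.le] at h
        rw [h, show K - σ - 1 + 1 = K - σ by ring]
      calc ∫ s in Ioc t d, Fn σ τ K t d s
          ≤ ∫ s in Ioc t d, t ^ σ * d ^ (-K) * s ^ (K - σ - 1) := by
            apply setIntegral_mono_on _ (hint2.const_mul _) measurableSet_Ioc
            · intro s hs
              exact pw_mid hσ hK0 ht hs.1 hs.2
            · exact hFint.mono_set (by
                rw [← Ioc_union_Ioi_eq_Ioi ht.le]
                exact subset_union_right.trans' (by
                  rw [← Ioc_union_Ioi_eq_Ioi hcase.le]; exact subset_union_left))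
        _ = t ^ σ * d ^ (-K) * ((d ^ (K - σ) - t ^ (K - σ)) / (K - σ)) := by
            rw [integral_const_mul, hval]
        _ ≤ t ^ σ * d ^ (-σ) * (1 / (K - σ)) := by
            have e1 : d ^ (-K) * d ^ (K - σ) = d ^ (-σ) := by
              rw [rpow_mul_rpow _ _ _ hd0]; ring_nf
            have h1 : (0:ℝ) ≤ t ^ σ := by positivity
            have h2 : (0:ℝ) ≤ d ^ (-K) := by positivity
            have h3 : (0:ℝ) ≤ t ^ (K - σ) := by positivity
            have hnum : t ^ σ * d ^ (-K) * (d ^ (K - σ) - t ^ (K - σ)) ≤ t ^ σ * d ^ (-σ) := by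
              have e2 : t ^ σ * d ^ (-K) * (d ^ (K - σ) - t ^ (K - σ))
                  = t ^ σ * d ^ (-σ) - t ^ σ * (d ^ (-K) * t ^ (K - σ)) := by
                rw [← e1]; ring
              rw [e2]
              nlinarith [mul_nonneg h1 (mul_nonneg h2 h3)]
            calc t ^ σ * d ^ (-K) * ((d ^ (K - σ) - t ^ (K - σ)) / (K - σ))
                = (t ^ σ * d ^ (-K) * (d ^ (K - σ) - t ^ (K - σ))) * (1 / (K - σ)) := by ring
              _ ≤ t ^ σ * d ^ (-σ) * (1 / (K - σ)) :=
                  mul_le_mul_of_nonneg_right hnum (one_div_nonneg.2 hKσ.le)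
        _ ≤ 2 ^ σ * w * (1 / (K - σ)) :=
            mul_le_mul_of_nonneg_right (ratio_le hσ ht hcase.le) (one_div_nonneg.2 hKσ.le)
    have hP3 : ∫ s in Ioi d, Fn σ τ K t d s ≤ 2 ^ σ * w * (1 / σ) := by
      calc ∫ s in Ioi d, Fn σ τ K t d s
          ≤ ∫ s in Ioi d, t ^ σ * s ^ (-σ - 1) := by
            apply setIntegral_mono_on _
              ((integrableOn_Ioi_rpow_of_lt (by linarith : -σ - 1 < -1) hd0).const_mul _)
              measurableSet_Ioi
            · intro s hs
              exact pw_high hK0.le ht hd (hd0.trans hs)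
            · exact hFint.mono_set (by
                rw [← Ioc_union_Ioi_eq_Ioi ht.le]
                exact (Ioi_subset_Ioi hcase.le).trans subset_union_right)
        _ = t ^ σ * (d ^ (-σ) / σ) := by rw [integral_const_mul, integral_pow2 hσ hd0]
        _ = t ^ σ * d ^ (-σ) * (1 / σ) := by ring
        _ ≤ 2 ^ σ * w * (1 / σ) :=
            mul_le_mul_of_nonneg_right (ratio_le hσ ht hcase.le) (one_div_nonneg.2 hσ.le)
    have e1 : w * (1 / τ) ≤ 2 ^ σ * w * (1 / τ) := by
      nlinarith [mul_le_mul_of_nonneg_right h2σ1 (mul_nonneg hw0.le (one_div_nonneg.2 hτ.le))]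
    have goal_eq : 2 ^ σ * (1 / τ + 1 / σ + 1 / (K - σ)) * w =
        2 ^ σ * w * (1 / τ) + (2 ^ σ * w * (1 / (K - σ)) + 2 ^ σ * w * (1 / σ)) := by ring
    rw [goal_eq]
    linarith

end Stmt11Aux

end ScalarAux

namespace Stmt11Aux

variable {α : Type*} [MeasurableSpace α] {μ : Measure α}
    {E : Type*} [NormedAddCommGroup E] [NormedSpace ℂ E] {p : ℝ≥0∞}
    {S : Set α} (hS : MeasurableSet S)

lemma setDist_nonneg (E F : Set α) [PseudoMetricSpace α] : 0 ≤ setDist E F := by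
  apply Real.sInf_nonneg
  rintro x ⟨a, _, b, _, rfl⟩
  exact dist_nonneg

lemma indLp_add (u v : Lp E p μ) : indLp hS (u + v) = indLp hS u + indLp hS v := by
  unfold indLp
  rw [← MemLp.toLp_add]
  apply MemLp.toLp_congr
  filter_upwards [Lp.coeFn_add u v] with x hx
  simp only [Set.indicator]
  rw [hx]
  by_cases h : x ∈ S <;> simp [h]

lemma indLp_smul (c : ℂ) (u : Lp E p μ) : indLp hS (c • u) = c • indLp hS u := by
  unfold indLp
  rw [← MemLp.toLp_const_smul]
  apply MemLp.toLp_congr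
  filter_upwards [Lp.coeFn_smul c u] with x hx
  simp only [Set.indicator, Pi.smul_apply]
  rw [hx]
  by_cases h : x ∈ S <;> simp [h]

lemma indLp_norm_le (u : Lp E p μ) : ‖indLp hS u‖ ≤ ‖u‖ := by
  rw [indLp, Lp.norm_toLp, Lp.norm_def]
  exact ENNReal.toReal_mono (Lp.eLpNorm_ne_top u) (eLpNorm_indicator_le _)

lemma indLp_univ (u : Lp E p μ) : indLp (MeasurableSet.univ : MeasurableSet (Set.univ : Set α)) u = u := by
  unfold indLp
  rw [MemLp.toLp_congr _ (Lp.memLp u) (by simp [Set.indicator_univ])]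
  exact Lp.toLp_coeFn u (Lp.memLp u)

/-- Multiplication by an indicator as a continuous linear map on `Lp`. -/
noncomputable def indCLM [Fact (1 ≤ p)] (hS : MeasurableSet S) : Lp E p μ →L[ℂ] Lp E p μ :=
  LinearMap.mkContinuous
    { toFun := indLp hS
      map_add' := indLp_add hS
      map_smul' := indLp_smul hS } 1
    (fun u => by simpa using indLp_norm_le hS u)

@[simp] lemma indCLM_apply [Fact (1 ≤ p)] (u : Lp E p μ) : indCLM hS u = indLp hS u := rfl

end Stmt11Aux


open Stmt11Aux

/-- Abstract form of Proposition 3.1: if a strongly measurable family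
`(A_s)_{s>0}` of bounded operators on `L^q(ℝ^n, ℂ^N)` satisfies off-diagonal estimates
`‖χ_F A_s (χ_E u)‖ ≤ C (1 + d(E,F)/s)^{-K}‖χ_E u‖` of order `K > σ`, and
`|m(s)| ≤ min((t/s)^σ, (s/t)^τ)` with `t > 0`, `σ, τ > 0`, then
`T u = ∫₀^∞ m(s) A_s u ds/s` converges in `L^q` and satisfies
`‖χ_F T (χ_E u)‖ ≤ C' (1 + d(E,F)/t)^{-σ} ‖χ_E u‖` with `C'` depending only on
`σ, τ, K, C`. -/
theorem stmt11 (σ τ K C : ℝ) (hσ : 0 < σ) (hτ : 0 < τ) (hK : σ < K) (hC : 0 < C) :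
    ∃ C' : ℝ, 0 < C' ∧
      ∀ (n N : ℕ), 1 ≤ n → 1 ≤ N → ∀ (q : ℝ≥0∞) [Fact (1 ≤ q)], 1 < q → q ≠ ⊤ →
      ∀ (A : ℝ →
        (Lp (EuclideanSpace ℂ (Fin N)) q (volume : Measure (EuclideanSpace ℝ (Fin n))) →L[ℂ]
          Lp (EuclideanSpace ℂ (Fin N)) q (volume : Measure (EuclideanSpace ℝ (Fin n))))),
      (∀ u, AEStronglyMeasurable (fun s => A s u) (volume.restrict (Set.Ioi (0 : ℝ)))) →
      (∀ s : ℝ, 0 < s → ∀ (E F : Set (EuclideanSpace ℝ (Fin n)))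
          (hE : MeasurableSet E) (hF : MeasurableSet F), ∀ u,
        ‖indLp hF (A s (indLp hE u))‖ ≤ C * (1 + setDist E F / s) ^ (-K) * ‖indLp hE u‖) →
      ∀ (t : ℝ), 0 < t → ∀ (m : ℝ → ℂ), Measurable m →
      (∀ s : ℝ, 0 < s → ‖m s‖ ≤ min ((t / s) ^ σ) ((s / t) ^ τ)) →
      (∀ u, Integrable (fun s => (m s / (s : ℂ)) • A s u)
          (volume.restrict (Set.Ioi (0 : ℝ)))) ∧
      ∀ (E F : Set (EuclideanSpace ℝ (Fin n)))
          (hE : MeasurableSet E) (hF : MeasurableSet F), ∀ u,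
        ‖indLp hF (∫ s in Set.Ioi (0 : ℝ), (m s / (s : ℂ)) • A s (indLp hE u))‖ ≤
          C' * (1 + setDist E F / t) ^ (-σ) * ‖indLp hE u‖ := by
  have hK0 : 0 < K := hσ.trans hK
  have hKσ : 0 < K - σ := sub_pos.2 hK
  have hSpos : (0:ℝ) < 1 / τ + 1 / σ + 1 / (K - σ) :=
    add_pos (add_pos (by positivity) (by positivity)) (one_div_pos.2 hKσ)
  have hC0 : (0:ℝ) < 2 ^ σ * (1 / τ + 1 / σ + 1 / (K - σ)) := by positivity
  refine ⟨C * (2 ^ σ * (1 / τ + 1 / σ + 1 / (K - σ))), by positivity, ?_⟩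
  intro n N hn hN q instq hq1 hqT A hA hod t ht m hm hmb
  -- uniform operator bound
  have hop : ∀ s : ℝ, 0 < s → ∀ u, ‖A s u‖ ≤ C * ‖u‖ := by
    intro s hs u
    have h := hod s hs Set.univ Set.univ MeasurableSet.univ MeasurableSet.univ u
    simp only [indLp_univ] at h
    have hfac : (1 + setDist (Set.univ : Set (EuclideanSpace ℝ (Fin n))) Set.univ / s) ^ (-K) ≤ 1 :=
      fac_le_one hK0.le (setDist_nonneg _ _) hs
    have h2 : C * (1 + setDist (Set.univ : Set (EuclideanSpace ℝ (Fin n))) Set.univ / s) ^ (-K) ≤ C * 1 :=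
      mul_le_mul_of_nonneg_left hfac hC.le
    nlinarith [mul_le_mul_of_nonneg_right h2 (norm_nonneg u)]
  -- norm of scalar
  have hnorm : ∀ s : ℝ, 0 < s → ‖m s / (s : ℂ)‖ ≤ min ((t / s) ^ σ) ((s / t) ^ τ) * s⁻¹ := by
    intro s hs
    rw [norm_div, Complex.norm_real, Real.norm_eq_abs, abs_of_pos hs, div_eq_mul_inv]
    exact mul_le_mul_of_nonneg_right (hmb s hs) (by positivity)
  -- integrability
  have hint : ∀ u, Integrable (fun s => (m s / (s : ℂ)) • A s u)
      (volume.restrict (Set.Ioi (0 : ℝ))) := by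
    intro u
    apply Integrable.mono' ((integrableOn_min_g hσ hτ ht).const_mul (C * ‖u‖))
    · exact ((hm.div Complex.measurable_ofReal).aestronglyMeasurable).smul (hA u)
    · filter_upwards [ae_restrict_mem measurableSet_Ioi] with s hs
      have hs0 : 0 < s := hs
      rw [norm_smul]
      calc ‖m s / (s : ℂ)‖ * ‖A s u‖
          ≤ (min ((t / s) ^ σ) ((s / t) ^ τ) * s⁻¹) * (C * ‖u‖) :=
            mul_le_mul (hnorm s hs0) (hop s hs0 u) (norm_nonneg _) (by positivity)
        _ = C * ‖u‖ * (min ((t / s) ^ σ) ((s / t) ^ τ) * s⁻¹) := by ring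
  refine ⟨hint, ?_⟩
  intro E F hE hF u
  set D : ℝ := setDist E F with hD
  have hd : 0 ≤ D := setDist_nonneg _ _
  set v := indLp hE u with hv
  have hiv := hint v
  have e : indLp hF (∫ s in Set.Ioi (0:ℝ), (m s / (s : ℂ)) • A s v) =
      ∫ s in Set.Ioi (0:ℝ), indLp hF ((m s / (s : ℂ)) • A s v) :=
    ((indCLM hF).integral_comp_comm hiv).symm
  calc ‖indLp hF (∫ s in Set.Ioi (0:ℝ), (m s / (s : ℂ)) • A s v)‖
      = ‖∫ s in Set.Ioi (0:ℝ), indLp hF ((m s / (s : ℂ)) • A s v)‖ := by rw [e]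
    _ ≤ ∫ s in Set.Ioi (0:ℝ), ‖indLp hF ((m s / (s : ℂ)) • A s v)‖ :=
        norm_integral_le_integral_norm _
    _ ≤ ∫ s in Set.Ioi (0:ℝ), (C * ‖v‖) * Fn σ τ K t D s := by
        apply integral_mono_of_nonneg (ae_of_all _ fun s => norm_nonneg _)
          ((Fn_integrableOn hσ hτ hK0.le ht hd).const_mul _)
        filter_upwards [ae_restrict_mem measurableSet_Ioi] with s hs
        have hs0 : 0 < s := hs
        have hodg := hod s hs0 E F hE hF u
        rw [indLp_smul, norm_smul]
        calc ‖m s / (s : ℂ)‖ * ‖indLp hF (A s v)‖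
            ≤ (min ((t / s) ^ σ) ((s / t) ^ τ) * s⁻¹) * (C * (1 + D / s) ^ (-K) * ‖v‖) :=
              mul_le_mul (hnorm s hs0) hodg (norm_nonneg _) (by positivity)
          _ = (C * ‖v‖) * Fn σ τ K t D s := by unfold Fn; ring
    _ = (C * ‖v‖) * ∫ s in Set.Ioi (0:ℝ), Fn σ τ K t D s := integral_const_mul _ _
    _ ≤ (C * ‖v‖) * (2 ^ σ * (1 / τ + 1 / σ + 1 / (K - σ)) * (1 + D / t) ^ (-σ)) :=
        mul_le_mul_of_nonneg_left (key hσ hτ hK ht hd) (by positivity)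
    _ = C * (2 ^ σ * (1 / τ + 1 / σ + 1 / (K - σ))) * (1 + D / t) ^ (-σ) * ‖v‖ := by ring
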